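/- Let Σ be a positive definite diagonal N×N real matrix, B ∈ ℝ^{N×M}, P̃ a positive definite diagonal M×M matrix, and R = BP̃Bᵀ + Σ. Then R is positive definite, and the function x ↦ (y−Bx)ᵀΣ^{−1}(y−Bx) + xᵀP̃^{−1}x is strictly convex with unique minimizer x̂ = P̃BᵀR^{−1}y. -/

import Mathlib

open Matrix

private lemma spice_dot_shift {m n : ℕ} (B : Matrix (Fin n) (Fin m) ℝ)
    (Msq : Matrix (Fin n) (Fin n) ℝ) (d : Fin m → ℝ) (w : Fin n → ℝ) :
    (B *ᵥ d) ⬝ᵥ (Msq *ᵥ w) = d ⬝ᵥ ((Bᵀ * Msq) *ᵥ w) := by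
  rw [← Matrix.mulVec_mulVec, Matrix.dotProduct_mulVec d, ← Matrix.vecMul_transpose]

private lemma spice_dot_symm {n : ℕ} (Msq : Matrix (Fin n) (Fin n) ℝ)
    (hM : Msqᵀ = Msq) (u v : Fin n → ℝ) :
    u ⬝ᵥ (Msq *ᵥ v) = v ⬝ᵥ (Msq *ᵥ u) := by
  rw [Matrix.dotProduct_mulVec, dotProduct_comm, ← Matrix.mulVec_transpose, hM]

/-- Real version of Lemma 1: with `R = B P̃ Bᵀ + Σ` (`P̃`, `Σ` positive definite
diagonal), `R` is positive definite, and
`x ↦ (y−Bx)ᵀ Σ⁻¹ (y−Bx) + xᵀ P̃⁻¹ x` is strictly convex with unique minimizer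
`x̂ = P̃ Bᵀ R⁻¹ y`. -/
theorem spice_lemma1_real_convexity (M N : ℕ) (B : Matrix (Fin N) (Fin M) ℝ)
    (p : Fin M → ℝ) (s : Fin N → ℝ) (hp : ∀ k, 0 < p k) (hs : ∀ k, 0 < s k)
    (y : Fin N → ℝ)
    (Ptil : Matrix (Fin M) (Fin M) ℝ) (hPtil : Ptil = Matrix.diagonal p)
    (Sig : Matrix (Fin N) (Fin N) ℝ) (hSig : Sig = Matrix.diagonal s)
    (R : Matrix (Fin N) (Fin N) ℝ) (hR : R = B * Ptil * Bᵀ + Sig) :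
    letI f : (Fin M → ℝ) → ℝ := fun x =>
      (y - B.mulVec x) ⬝ᵥ Sig⁻¹.mulVec (y - B.mulVec x) + x ⬝ᵥ Ptil⁻¹.mulVec x
    letI xhat : Fin M → ℝ := (Ptil * Bᵀ * R⁻¹).mulVec y
    R.PosDef ∧ StrictConvexOn ℝ Set.univ f ∧
    ∀ x : Fin M → ℝ, x ≠ xhat → f xhat < f x := by
  subst hPtil hSig hR
  set R := B * Matrix.diagonal p * Bᵀ + Matrix.diagonal s with hRdef
  set f : (Fin M → ℝ) → ℝ := fun x =>
    (y - B *ᵥ x) ⬝ᵥ ((Matrix.diagonal s)⁻¹ *ᵥ (y - B *ᵥ x)) + x ⬝ᵥ ((Matrix.diagonal p)⁻¹ *ᵥ x)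
    with hfeq
  set xhat : Fin M → ℝ := (Matrix.diagonal p * Bᵀ * R⁻¹) *ᵥ y with hxhat
  -- inverses of the diagonal matrices
  have hSi : (Matrix.diagonal s)⁻¹ = Matrix.diagonal (fun k => (s k)⁻¹) := by
    apply Matrix.inv_eq_right_inv
    rw [Matrix.diagonal_mul_diagonal]
    convert Matrix.diagonal_one using 2
    funext k
    exact mul_inv_cancel₀ (hs k).ne'
  have hPi : (Matrix.diagonal p)⁻¹ = Matrix.diagonal (fun k => (p k)⁻¹) := by
    apply Matrix.inv_eq_right_inv
    rw [Matrix.diagonal_mul_diagonal]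
    convert Matrix.diagonal_one using 2
    funext k
    exact mul_inv_cancel₀ (hp k).ne'
  have hSiS : (Matrix.diagonal s)⁻¹ * Matrix.diagonal s = 1 := by
    rw [hSi, Matrix.diagonal_mul_diagonal]
    convert Matrix.diagonal_one using 2
    funext k
    exact inv_mul_cancel₀ (hs k).ne'
  have hPiP : (Matrix.diagonal p)⁻¹ * Matrix.diagonal p = 1 := by
    rw [hPi, Matrix.diagonal_mul_diagonal]
    convert Matrix.diagonal_one using 2
    funext k
    exact inv_mul_cancel₀ (hp k).ne'
  -- positive definiteness of R
  have hPpd : (Matrix.diagonal p).PosDef := Matrix.PosDef.diagonal hp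
  have hSpd : (Matrix.diagonal s).PosDef := Matrix.PosDef.diagonal hs
  have hBPB : (B * Matrix.diagonal p * Bᵀ).PosSemidef := by
    have := hPpd.posSemidef.mul_mul_conjTranspose_same B
    rwa [Matrix.conjTranspose_eq_transpose_of_trivial] at this
  have hRpd : (B * Matrix.diagonal p * Bᵀ + Matrix.diagonal s).PosDef :=
    Matrix.PosDef.posSemidef_add hBPB hSpd
  -- the Hessian matrix A
  set Si := (Matrix.diagonal s)⁻¹ with hSidef
  set Pi' := (Matrix.diagonal p)⁻¹ with hPidef
  set A := Bᵀ * Si * B + Pi' with hAdef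
  have hSipd : Si.PosDef := by rw [hSi]; exact Matrix.PosDef.diagonal fun k => inv_pos.mpr (hs k)
  have hPipd : Pi'.PosDef := by rw [hPi]; exact Matrix.PosDef.diagonal fun k => inv_pos.mpr (hp k)
  have hApd : A.PosDef := by
    apply Matrix.PosDef.posSemidef_add _ hPipd
    have := hSipd.posSemidef.mul_mul_conjTranspose_same Bᵀ
    rwa [Matrix.conjTranspose_eq_transpose_of_trivial, Matrix.transpose_transpose] at this
  have hAsymm : Aᵀ = A := by
    have := hApd.isHermitian
    rwa [Matrix.IsHermitian, Matrix.conjTranspose_eq_transpose_of_trivial] at this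
  have hSisymm : Siᵀ = Si := by rw [hSi, Matrix.diagonal_transpose]
  have hPisymm : Pi'ᵀ = Pi' := by rw [hPi, Matrix.diagonal_transpose]
  -- R is invertible
  have hRinv : R * R⁻¹ = 1 := Matrix.mul_nonsing_inv _ hRpd.det_pos.ne'.isUnit
  -- key matrix identity
  have hKey : A * (Matrix.diagonal p * Bᵀ * R⁻¹) = Bᵀ * Si := by
    have h2 : Bᵀ * Si * Matrix.diagonal s = Bᵀ := by
      rw [Matrix.mul_assoc, hSiS, Matrix.mul_one]
    have h1 : A * Matrix.diagonal p * Bᵀ = Bᵀ * Si * R := by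
      rw [hAdef, hRdef, Matrix.add_mul, Matrix.add_mul, hPiP, Matrix.one_mul,
        Matrix.mul_add, h2]
      simp only [Matrix.mul_assoc]
    calc A * (Matrix.diagonal p * Bᵀ * R⁻¹)
        = A * Matrix.diagonal p * Bᵀ * R⁻¹ := by
          rw [Matrix.mul_assoc, Matrix.mul_assoc, Matrix.mul_assoc]
      _ = Bᵀ * Si * (R * R⁻¹) := by rw [h1, Matrix.mul_assoc]
      _ = Bᵀ * Si := by rw [hRinv, Matrix.mul_one]
  have hAx : A *ᵥ xhat = (Bᵀ * Si) *ᵥ y := by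
    rw [hxhat, Matrix.mulVec_mulVec, hKey]
  -- quadratic expansion of f around xhat
  have hfdef : ∀ x, f x = (y - B *ᵥ x) ⬝ᵥ (Si *ᵥ (y - B *ᵥ x)) + x ⬝ᵥ (Pi' *ᵥ x) := by
    intro x; rw [hfeq]
  have hcross : ∀ d, (B *ᵥ d) ⬝ᵥ (Si *ᵥ (y - B *ᵥ xhat)) = d ⬝ᵥ (Pi' *ᵥ xhat) := by
    intro d
    rw [spice_dot_shift]
    have h2 : (Bᵀ * Si) *ᵥ (y - B *ᵥ xhat)
        = (Bᵀ * Si) *ᵥ y - (Bᵀ * Si * B) *ᵥ xhat := by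
      rw [Matrix.mulVec_sub, Matrix.mulVec_mulVec]
    have h3 : (Bᵀ * Si) *ᵥ y = (Bᵀ * Si * B) *ᵥ xhat + Pi' *ᵥ xhat := by
      rw [← hAx, hAdef, Matrix.add_mulVec]
    rw [h2, h3]
    simp [dotProduct_sub]
  have hquad : ∀ d, d ⬝ᵥ (A *ᵥ d) = (B *ᵥ d) ⬝ᵥ (Si *ᵥ (B *ᵥ d)) + d ⬝ᵥ (Pi' *ᵥ d) := by
    intro d
    rw [hAdef, Matrix.add_mulVec, dotProduct_add, spice_dot_shift, Matrix.mul_assoc,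
      ← Matrix.mulVec_mulVec]
    simp only [Matrix.mulVec_mulVec, Matrix.mul_assoc]
  have hf : ∀ d, f (xhat + d) = f xhat + d ⬝ᵥ (A *ᵥ d) := by
    intro d
    rw [hfdef, hfdef, hquad]
    have e1 : y - B *ᵥ (xhat + d) = (y - B *ᵥ xhat) - B *ᵥ d := by
      rw [Matrix.mulVec_add]; abel
    rw [e1]
    have hc' : (B *ᵥ d) ⬝ᵥ (Si *ᵥ y) - (B *ᵥ d) ⬝ᵥ (Si *ᵥ (B *ᵥ xhat)) = d ⬝ᵥ (Pi' *ᵥ xhat) := by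
      have := hcross d
      rwa [Matrix.mulVec_sub, dotProduct_sub] at this
    have s1 : y ⬝ᵥ (Si *ᵥ (B *ᵥ d)) = (B *ᵥ d) ⬝ᵥ (Si *ᵥ y) := spice_dot_symm Si hSisymm _ _
    have s2 : (B *ᵥ xhat) ⬝ᵥ (Si *ᵥ (B *ᵥ d)) = (B *ᵥ d) ⬝ᵥ (Si *ᵥ (B *ᵥ xhat)) :=
      spice_dot_symm Si hSisymm _ _
    have s3 : xhat ⬝ᵥ (Pi' *ᵥ d) = d ⬝ᵥ (Pi' *ᵥ xhat) := spice_dot_symm Pi' hPisymm _ _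
    simp only [Matrix.mulVec_sub, Matrix.mulVec_add, dotProduct_sub, sub_dotProduct,
      dotProduct_add, add_dotProduct]
    linarith [hc', s1, s2, s3]
  have hfx : ∀ x, f x = f xhat + (x - xhat) ⬝ᵥ (A *ᵥ (x - xhat)) := by
    intro x
    have := hf (x - xhat)
    rwa [add_sub_cancel] at this
  have hqpos : ∀ d : Fin M → ℝ, d ≠ 0 → 0 < d ⬝ᵥ (A *ᵥ d) := by
    intro d hd
    have := hApd.dotProduct_mulVec_pos hd
    rwa [star_trivial] at this
  refine ⟨hRpd, ?_, ?_⟩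
  · refine ⟨convex_univ, ?_⟩
    intro x _ z _ hxz a b ha hb hab
    set u := x - xhat with hu
    set v := z - xhat with hv
    have hxu : x = xhat + u := by rw [hu]; abel
    have hzv : z = xhat + v := by rw [hv]; abel
    have hcomb : a • x + b • z = xhat + (a • u + b • v) := by
      rw [hxu, hzv, smul_add, smul_add, add_add_add_comm, ← add_smul, hab, one_smul]
    have huv : u - v = x - z := by rw [hu, hv]; abel
    have huvne : u - v ≠ 0 := by rw [huv]; exact sub_ne_zero.mpr hxz
    have hQd := hqpos _ huvne
    -- expansions
    have hexp : (a • u + b • v) ⬝ᵥ (A *ᵥ (a • u + b • v))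
        = a * a * (u ⬝ᵥ (A *ᵥ u)) + a * b * (u ⬝ᵥ (A *ᵥ v)) + a * b * (v ⬝ᵥ (A *ᵥ u))
          + b * b * (v ⬝ᵥ (A *ᵥ v)) := by
      simp only [Matrix.mulVec_add, Matrix.mulVec_smul, dotProduct_add, add_dotProduct,
        dotProduct_smul, smul_dotProduct, smul_eq_mul]
      ring
    have hdexp : (u - v) ⬝ᵥ (A *ᵥ (u - v))
        = u ⬝ᵥ (A *ᵥ u) - u ⬝ᵥ (A *ᵥ v) - v ⬝ᵥ (A *ᵥ u) + v ⬝ᵥ (A *ᵥ v) := by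
      simp only [Matrix.mulVec_sub, dotProduct_sub, sub_dotProduct]
      ring
    have hfl : f (a • x + b • z) = f xhat + (a • u + b • v) ⬝ᵥ (A *ᵥ (a • u + b • v)) := by
      rw [hcomb, hf]
    have hdiff : a * (f xhat + u ⬝ᵥ (A *ᵥ u)) + b * (f xhat + v ⬝ᵥ (A *ᵥ v))
        - (f xhat + (a * a * (u ⬝ᵥ (A *ᵥ u)) + a * b * (u ⬝ᵥ (A *ᵥ v))
            + a * b * (v ⬝ᵥ (A *ᵥ u)) + b * b * (v ⬝ᵥ (A *ᵥ v))))
        = a * b * ((u - v) ⬝ᵥ (A *ᵥ (u - v))) := by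
      rw [hdexp]
      linear_combination (f xhat - a * (u ⬝ᵥ (A *ᵥ u)) - b * (v ⬝ᵥ (A *ᵥ v))) * hab
    have hposq : 0 < a * b * ((u - v) ⬝ᵥ (A *ᵥ (u - v))) := mul_pos (mul_pos ha hb) hQd
    rw [hfl, smul_eq_mul, smul_eq_mul, hxu, hzv, hf, hf, hexp]
    linarith [hdiff, hposq]
  · intro x hx
    rw [hfx x]
    have : 0 < (x - xhat) ⬝ᵥ (A *ᵥ (x - xhat)) := hqpos _ (sub_ne_zero.mpr hx)
    linarith
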